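/- Optimal control formula, sufficiency (Theorem 2): assume Σ_0 and each Q_t are positive semidefinite and each R_t is positive definite. Suppose (y, p, u*) satisfy the coupled forward–backward system: y_T = f and y_t = Σ_{s=1}^{T-t} A_{t+s,s}^⊤ y_{t+s} + C_t^⊤ u*_t for 0 ≤ t ≤ T-1 (backward); p_0 = Σ_0 y_0 and p_t = Σ_{s=1}^{t} A_{t,s} p_{t-s} + Q_t y_t for 1 ≤ t ≤ T (forward); and u*_t = − R_t^{-1} C_t p_t for 0 ≤ t ≤ T-1. Then u* is a global minimizer of the dual cost: J_T(u*; f) ≤ J_T(u; f) for all u ∈ 𝒰. -/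

import Mathlib

open Matrix Finset

lemma reindex_aux (T : ℕ) (G : ℕ → ℕ → ℝ) :
    ∑ t ∈ range T, ∑ s ∈ Icc 1 (T - t), G t s = ∑ r ∈ Icc 1 T, ∑ s ∈ Icc 1 r, G (r - s) s := by
  rw [Finset.sum_sigma', Finset.sum_sigma']
  apply Finset.sum_nbij' (fun x => ⟨x.1 + x.2, x.2⟩) (fun x => ⟨x.1 - x.2, x.2⟩) <;>
    simp only [Finset.mem_sigma, Finset.mem_range, Finset.mem_Icc] <;>
    rintro ⟨a, b⟩ h <;> simp_all <;> omega

lemma quad_expand {n : ℕ} (M : Matrix (Fin n) (Fin n) ℝ) (hM : Mᵀ = M) (a b : Fin n → ℝ) :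
    (1/2) * (b ⬝ᵥ M.mulVec b)
      = (1/2) * (a ⬝ᵥ M.mulVec a) + (b - a) ⬝ᵥ M.mulVec a
        + (1/2) * ((b - a) ⬝ᵥ M.mulVec (b - a)) := by
  have hsym : a ⬝ᵥ M.mulVec (b - a) = (b - a) ⬝ᵥ M.mulVec a := by
    rw [Matrix.dotProduct_mulVec, ← Matrix.mulVec_transpose, hM, dotProduct_comm]
  have expand : (a + (b - a)) ⬝ᵥ M.mulVec (a + (b - a))
      = a ⬝ᵥ M.mulVec a + 2 * ((b - a) ⬝ᵥ M.mulVec a)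
        + (b - a) ⬝ᵥ M.mulVec (b - a) := by
    rw [Matrix.mulVec_add, dotProduct_add, add_dotProduct,
      add_dotProduct, hsym]; ring
  have hb : a + (b - a) = b := by abel
  rw [hb] at expand
  rw [expand]; ring


lemma sum_dotProduct' {n : ℕ} {ι : Type*} (s : Finset ι) (f : ι → Fin n → ℝ) (w : Fin n → ℝ) :
    (∑ i ∈ s, f i) ⬝ᵥ w = ∑ i ∈ s, f i ⬝ᵥ w := by
  induction s using Finset.cons_induction with
  | empty => simp
  | cons a s ha ih => simp [Finset.sum_cons, add_dotProduct, ih]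

lemma dotProduct_sum' {n : ℕ} {ι : Type*} (s : Finset ι) (v : Fin n → ℝ) (f : ι → Fin n → ℝ) :
    v ⬝ᵥ (∑ i ∈ s, f i) = ∑ i ∈ s, v ⬝ᵥ f i := by
  induction s using Finset.cons_induction with
  | empty => simp
  | cons a s ha ih => simp [Finset.sum_cons, dotProduct_add, ih]


/-- The backward difference equation (dual control system): `y_T = f` and
`y_t = ∑_{s=1}^{T-t} A_{t+s,s}ᵀ y_{t+s} + C_tᵀ u_t` for every `0 ≤ t ≤ T-1`. -/
def IsDualSol (T d m : ℕ) (A : ℕ → ℕ → Matrix (Fin d) (Fin d) ℝ)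
    (C : ℕ → Matrix (Fin m) (Fin d) ℝ) (u : ℕ → Fin m → ℝ) (f : Fin d → ℝ)
    (y : ℕ → Fin d → ℝ) : Prop :=
  y T = f ∧
    ∀ t < T, y t =
      (∑ s ∈ Finset.Icc 1 (T - t), ((A (t + s) s)ᵀ).mulVec (y (t + s)))
        + ((C t)ᵀ).mulVec (u t)

/-- The dual optimal control cost
`J_T(u; f) = ½ y_0ᵀ Σ0 y_0 + ∑_{t=1}^{T} ½ y_tᵀ Q_t y_t + ∑_{t=0}^{T-1} ½ u_tᵀ R_t u_t`,
expressed in terms of the dual-state solution `y` for `(u, f)`. -/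
noncomputable def dualCost (T d m : ℕ) (Sig0 : Matrix (Fin d) (Fin d) ℝ)
    (Q : ℕ → Matrix (Fin d) (Fin d) ℝ) (R : ℕ → Matrix (Fin m) (Fin m) ℝ)
    (y : ℕ → Fin d → ℝ) (u : ℕ → Fin m → ℝ) : ℝ :=
  (1 / 2) * (y 0 ⬝ᵥ Sig0.mulVec (y 0))
    + (∑ t ∈ Finset.Icc 1 T, (1 / 2) * (y t ⬝ᵥ (Q t).mulVec (y t)))
    + ∑ t ∈ Finset.range T, (1 / 2) * (u t ⬝ᵥ (R t).mulVec (u t))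

/-- Optimal control formula, sufficiency (Theorem 2): assume `Σ0` and each `Q_t` are
positive semidefinite and each `R_t` is positive definite. Suppose `(y, p, u*)` satisfy
the coupled forward–backward system: `y_T = f` and
`y_t = ∑_{s=1}^{T-t} A_{t+s,s}ᵀ y_{t+s} + C_tᵀ u*_t` for `0 ≤ t ≤ T-1` (backward);
`p_0 = Σ0 y_0` and `p_t = ∑_{s=1}^{t} A_{t,s} p_{t-s} + Q_t y_t` for `1 ≤ t ≤ T`
(forward); and `u*_t = − R_t⁻¹ C_t p_t` for `0 ≤ t ≤ T-1`. Then `u*` is a global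
minimizer of the dual cost: `J_T(u*; f) ≤ J_T(u; f)` for all `u ∈ 𝒰`. -/
theorem optimal_control_sufficiency
    (T d m : ℕ) (hT : 1 ≤ T) (hd : 1 ≤ d) (hm : 1 ≤ m)
    (A : ℕ → ℕ → Matrix (Fin d) (Fin d) ℝ)
    (C : ℕ → Matrix (Fin m) (Fin d) ℝ)
    (Sig0 : Matrix (Fin d) (Fin d) ℝ)
    (Q : ℕ → Matrix (Fin d) (Fin d) ℝ) (R : ℕ → Matrix (Fin m) (Fin m) ℝ)
    (hSig0 : Sig0.PosSemidef) (hQ : ∀ t, 1 ≤ t → t ≤ T → (Q t).PosSemidef)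
    (hR : ∀ t < T, (R t).PosDef)
    (f : Fin d → ℝ) (ustar : ℕ → Fin m → ℝ) (y p : ℕ → Fin d → ℝ)
    -- backward equation
    (hy : IsDualSol T d m A C ustar f y)
    -- forward (momentum) equation
    (hp0 : p 0 = Sig0.mulVec (y 0))
    (hp : ∀ t, 1 ≤ t → t ≤ T →
      p t = (∑ s ∈ Finset.Icc 1 t, (A t s).mulVec (p (t - s))) + (Q t).mulVec (y t))
    -- optimal control formula
    (hustar : ∀ t < T, ustar t = -((R t)⁻¹.mulVec ((C t).mulVec (p t)))) :
    ∀ (u : ℕ → Fin m → ℝ) (y' : ℕ → Fin d → ℝ),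
      IsDualSol T d m A C u f y' →
      dualCost T d m Sig0 Q R y ustar ≤ dualCost T d m Sig0 Q R y' u := by
  intro u y' hy'
  -- symmetry facts
  have hSigSym : Sig0ᵀ = Sig0 := hSig0.1
  have hQSym : ∀ t ∈ Icc 1 T, (Q t)ᵀ = Q t := by
    intro t ht; rw [mem_Icc] at ht; exact (hQ t ht.1 ht.2).1
  have hRSym : ∀ t ∈ range T, (R t)ᵀ = R t := by
    intro t ht; rw [mem_range] at ht; exact (hR t ht).1
  -- homogeneous backward equation for the difference
  have hδT : y' T - y T = 0 := by rw [hy'.1, hy.1, sub_self]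
  have hB : ∀ t < T, y' t - y t =
      (∑ s ∈ Icc 1 (T - t), ((A (t + s) s)ᵀ).mulVec (y' (t + s) - y (t + s)))
        + ((C t)ᵀ).mulVec (u t - ustar t) := by
    intro t ht
    rw [hy.2 t ht, hy'.2 t ht]
    simp only [Matrix.mulVec_sub, Finset.sum_sub_distrib]
    abel
  -- R (ustar t) = -(C t) p t
  have hRinv : ∀ t < T, (R t).mulVec (ustar t) = -((C t).mulVec (p t)) := by
    intro t ht
    rw [hustar t ht, Matrix.mulVec_neg, Matrix.mulVec_mulVec,
      Matrix.mul_nonsing_inv _ (hR t ht).det_pos.ne'.isUnit, Matrix.one_mulVec]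
  -- key summation identity
  have hkey : ∑ t ∈ range T, (y' t - y t) ⬝ᵥ p t
      = (∑ r ∈ Icc 1 T, ∑ s ∈ Icc 1 r, (y' r - y r) ⬝ᵥ (A r s).mulVec (p (r - s)))
        + ∑ t ∈ range T, (u t - ustar t) ⬝ᵥ (C t).mulVec (p t) := by
    have h1 : ∀ t ∈ range T, (y' t - y t) ⬝ᵥ p t
        = (∑ s ∈ Icc 1 (T - t), (y' (t + s) - y (t + s)) ⬝ᵥ (A (t + s) s).mulVec (p t))
          + (u t - ustar t) ⬝ᵥ (C t).mulVec (p t) := by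
      intro t ht; rw [mem_range] at ht
      rw [hB t ht, add_dotProduct, sum_dotProduct']
      congr 1
      · refine Finset.sum_congr rfl fun s _ => ?_
        rw [Matrix.mulVec_transpose, ← Matrix.dotProduct_mulVec]
      · rw [Matrix.mulVec_transpose, ← Matrix.dotProduct_mulVec]
    rw [Finset.sum_congr rfl h1, Finset.sum_add_distrib]
    congr 1
    rw [reindex_aux T (fun t s => (y' (t + s) - y (t + s)) ⬝ᵥ (A (t + s) s).mulVec (p t))]
    refine Finset.sum_congr rfl fun r hr => Finset.sum_congr rfl fun s hs => ?_
    rw [mem_Icc] at hs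
    simp only [Nat.sub_add_cancel hs.2]
  -- boundary sum identity
  have hsum0 : (y' 0 - y 0) ⬝ᵥ p 0 + ∑ t ∈ Icc 1 T, (y' t - y t) ⬝ᵥ p t
      = ∑ t ∈ range T, (y' t - y t) ⬝ᵥ p t := by
    have h1 : ∑ t ∈ Icc 1 T, (y' t - y t) ⬝ᵥ p t
        = ∑ t ∈ range T, (y' (1 + t) - y (1 + t)) ⬝ᵥ p (1 + t) := by
      rw [← Finset.Ico_add_one_right_eq_Icc, Finset.sum_Ico_eq_sum_range]
      simp
    have h2 : ∑ t ∈ range (T + 1), (y' t - y t) ⬝ᵥ p t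
        = (∑ t ∈ range T, (y' (t + 1) - y (t + 1)) ⬝ᵥ p (t + 1))
          + (y' 0 - y 0) ⬝ᵥ p 0 := Finset.sum_range_succ' _ _
    have h3 : ∑ t ∈ range (T + 1), (y' t - y t) ⬝ᵥ p t
        = (∑ t ∈ range T, (y' t - y t) ⬝ᵥ p t) + (y' T - y T) ⬝ᵥ p T :=
      Finset.sum_range_succ _ _
    rw [hδT, zero_dotProduct] at h3
    simp only [Nat.add_comm 1] at h1
    rw [h1]
    linarith [h2, h3]
  -- cross term vanishes
  have hcross : (y' 0 - y 0) ⬝ᵥ Sig0.mulVec (y 0)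
      + (∑ t ∈ Icc 1 T, (y' t - y t) ⬝ᵥ (Q t).mulVec (y t))
      + (∑ t ∈ range T, (u t - ustar t) ⬝ᵥ (R t).mulVec (ustar t)) = 0 := by
    have hQ' : ∀ t ∈ Icc 1 T, (y' t - y t) ⬝ᵥ (Q t).mulVec (y t)
        = (y' t - y t) ⬝ᵥ p t
          - ∑ s ∈ Icc 1 t, (y' t - y t) ⬝ᵥ (A t s).mulVec (p (t - s)) := by
      intro t ht; rw [mem_Icc] at ht
      have hq : (Q t).mulVec (y t)
          = p t - ∑ s ∈ Icc 1 t, (A t s).mulVec (p (t - s)) := by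
        rw [hp t ht.1 ht.2]; abel
      rw [hq, dotProduct_sub, dotProduct_sum']
    have hRterm : ∑ t ∈ range T, (u t - ustar t) ⬝ᵥ (R t).mulVec (ustar t)
        = -∑ t ∈ range T, (u t - ustar t) ⬝ᵥ (C t).mulVec (p t) := by
      rw [← Finset.sum_neg_distrib]
      refine Finset.sum_congr rfl fun t ht => ?_
      rw [mem_range] at ht
      rw [hRinv t ht, dotProduct_neg]
    rw [← hp0, Finset.sum_congr rfl hQ', Finset.sum_sub_distrib, hRterm]
    have hD := hkey
    linarith [hsum0]
  -- expansion of the cost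
  have main : dualCost T d m Sig0 Q R y' u = dualCost T d m Sig0 Q R y ustar
      + ((y' 0 - y 0) ⬝ᵥ Sig0.mulVec (y 0)
        + (∑ t ∈ Icc 1 T, (y' t - y t) ⬝ᵥ (Q t).mulVec (y t))
        + (∑ t ∈ range T, (u t - ustar t) ⬝ᵥ (R t).mulVec (ustar t)))
      + ((1/2) * ((y' 0 - y 0) ⬝ᵥ Sig0.mulVec (y' 0 - y 0))
        + (∑ t ∈ Icc 1 T, (1/2) * ((y' t - y t) ⬝ᵥ (Q t).mulVec (y' t - y t)))
        + (∑ t ∈ range T, (1/2) * ((u t - ustar t) ⬝ᵥ (R t).mulVec (u t - ustar t)))) := by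
    unfold dualCost
    rw [quad_expand Sig0 hSigSym (y 0) (y' 0)]
    rw [Finset.sum_congr rfl fun t ht => quad_expand (Q t) (hQSym t ht) (y t) (y' t)]
    rw [Finset.sum_congr rfl fun t ht => quad_expand (R t) (hRSym t ht) (ustar t) (u t)]
    simp only [Finset.sum_add_distrib]
    ring
  rw [main, hcross]
  have n0 : 0 ≤ (1/2) * ((y' 0 - y 0) ⬝ᵥ Sig0.mulVec (y' 0 - y 0)) := by
    have h := hSig0.dotProduct_mulVec_nonneg (y' 0 - y 0); rw [star_trivial] at h; linarith
  have nQ : 0 ≤ ∑ t ∈ Icc 1 T, (1/2) * ((y' t - y t) ⬝ᵥ (Q t).mulVec (y' t - y t)) := by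
    refine Finset.sum_nonneg fun t ht => ?_
    rw [mem_Icc] at ht
    have h := (hQ t ht.1 ht.2).dotProduct_mulVec_nonneg (y' t - y t); rw [star_trivial] at h; linarith
  have nR : 0 ≤ ∑ t ∈ range T, (1/2) * ((u t - ustar t) ⬝ᵥ (R t).mulVec (u t - ustar t)) := by
    refine Finset.sum_nonneg fun t ht => ?_
    rw [mem_range] at ht
    have h := (hR t ht).posSemidef.dotProduct_mulVec_nonneg (u t - ustar t); rw [star_trivial] at h; linarith
  linarith
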